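/- arXiv:1402.0258 — 3 statements merged into one kernel-verified Lean document; each statement's English description precedes it below -/
import Mathlib

section
/- Fix discrete random variables $S, U_1,\dots,U_m, Y_1,\dots,Y_m$ where each $Y_i$ and each demand $f_i = f_i(S)$ is a deterministic function of $S$. For $j \in \{1,\dots,m\}$ define $K_j = \sum_{i=1}^{j-1} I(f_i; U_1^i \mid Y_1^i, f_1^{i-1}) + I(S; U_1^j \mid Y_1^j, f_1^{j-1}) + \sum_{i=j+1}^{m} I(S; U_i \mid Y_1^i, U_1^{i-1})$, where superscript notation denotes tuples, e.g., $U_1^i = (U_1,\dots,U_i)$. Then $K_1 \ge K_2 \ge \cdots \ge K_m$. -/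
/-- Probability that a finitely-valued random variable `X` takes value `x`, under the
probability mass function `p` on the finite sample space `Ω`. -/
noncomputable def probOf {Ω α : Type*} [Fintype Ω] [DecidableEq α]
    (p : Ω → ℝ) (X : Ω → α) (x : α) : ℝ :=
  ∑ ω, if X ω = x then p ω else 0

/-- Shannon entropy (natural logarithm) of a finitely-valued random variable. -/
noncomputable def shEnt {Ω α : Type*} [Fintype Ω] [Fintype α] [DecidableEq α]
    (p : Ω → ℝ) (X : Ω → α) : ℝ :=
  -∑ x, probOf p X x * Real.log (probOf p X x)

/-- Conditional Shannon entropy `H(X | Y)`. -/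
noncomputable def condEnt {Ω α β : Type*} [Fintype Ω] [Fintype α] [DecidableEq α]
    [Fintype β] [DecidableEq β] (p : Ω → ℝ) (X : Ω → α) (Y : Ω → β) : ℝ :=
  shEnt p (fun ω => (X ω, Y ω)) - shEnt p Y

/-- Mutual information `I(X ; Y)`. -/
noncomputable def mutInfo {Ω α β : Type*} [Fintype Ω] [Fintype α] [DecidableEq α]
    [Fintype β] [DecidableEq β] (p : Ω → ℝ) (X : Ω → α) (Y : Ω → β) : ℝ :=
  shEnt p X + shEnt p Y - shEnt p (fun ω => (X ω, Y ω))

/-- Conditional mutual information `I(X ; Y | Z)`. -/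
noncomputable def condMutInfo {Ω α β γ : Type*} [Fintype Ω] [Fintype α] [DecidableEq α]
    [Fintype β] [DecidableEq β] [Fintype γ] [DecidableEq γ]
    (p : Ω → ℝ) (X : Ω → α) (Y : Ω → β) (Z : Ω → γ) : ℝ :=
  condEnt p X Z - condEnt p X (fun ω => (Y ω, Z ω))

/-- The quantity `K_j` of Lemma 3 (1-indexed in the paper; variables are 0-indexed here,
so the paper's `U_i` is `U (i-1)` etc., and prefix tuples `U_1^i` are `fun t : Fin i => U t`):
`K j = ∑_{i=1}^{j-1} I(f_i; U_1^i | Y_1^i, f_1^{i-1}) + I(S; U_1^j | Y_1^j, f_1^{j-1})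
       + ∑_{i=j+1}^m I(S; U_i | Y_1^i, U_1^{i-1})`. -/
noncomputable def Kval {Ω σT υ αT βT : Type*} [Fintype Ω] [Fintype σT] [DecidableEq σT]
    [Fintype υ] [DecidableEq υ] [Fintype αT] [DecidableEq αT] [Fintype βT] [DecidableEq βT]
    (p : Ω → ℝ) (m : ℕ) (S : Ω → σT) (U : ℕ → Ω → υ) (Y : ℕ → Ω → αT) (F : ℕ → Ω → βT)
    (j : ℕ) : ℝ :=
  (∑ i ∈ Finset.range (j - 1),
      condMutInfo p (F i) (fun ω => (fun t : Fin (i + 1) => U t.val ω))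
        (fun ω => ((fun t : Fin (i + 1) => Y t.val ω), (fun t : Fin i => F t.val ω))))
  + condMutInfo p S (fun ω => (fun t : Fin j => U t.val ω))
      (fun ω => ((fun t : Fin j => Y t.val ω), (fun t : Fin (j - 1) => F t.val ω)))
  + ∑ i ∈ Finset.Ico j m,
      condMutInfo p S (U i)
        (fun ω => ((fun t : Fin (i + 1) => Y t.val ω), (fun t : Fin i => U t.val ω)))

section
variable {Ω α β γ δ : Type*} [Fintype Ω]

lemma probOf_nonneg [DecidableEq α] (p : Ω → ℝ) (hp0 : ∀ ω, 0 ≤ p ω) (X : Ω → α) (x : α) :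
    0 ≤ probOf p X x := by
  refine Finset.sum_nonneg fun ω _ => ?_
  split_ifs
  · exact hp0 ω
  · exact le_refl 0

lemma shEnt_eq_sum [Fintype α] [DecidableEq α] (p : Ω → ℝ) (X : Ω → α) :
    shEnt p X = -∑ ω, p ω * Real.log (probOf p X (X ω)) := by
  unfold shEnt
  congr 1
  calc ∑ x, probOf p X x * Real.log (probOf p X x)
      = ∑ x, ∑ ω, (if X ω = x then p ω * Real.log (probOf p X x) else 0) := by
        refine Finset.sum_congr rfl fun x _ => ?_
        rw [probOf, Finset.sum_mul]
        refine Finset.sum_congr rfl fun ω _ => ?_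
        split_ifs <;> ring
    _ = ∑ ω, ∑ x, (if X ω = x then p ω * Real.log (probOf p X x) else 0) :=
        Finset.sum_comm
    _ = ∑ ω, p ω * Real.log (probOf p X (X ω)) := by
        refine Finset.sum_congr rfl fun ω _ => ?_
        simp

lemma probOf_congr [DecidableEq α] [DecidableEq β] (p : Ω → ℝ) (X : Ω → α) (Y : Ω → β)
    (h : ∀ ω ω', (X ω = X ω') ↔ (Y ω = Y ω')) (ω : Ω) :
    probOf p X (X ω) = probOf p Y (Y ω) := by
  unfold probOf
  refine Finset.sum_congr rfl fun ω' _ => ?_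
  by_cases hc : X ω' = X ω
  · rw [if_pos hc, if_pos ((h ω' ω).mp hc)]
  · rw [if_neg hc, if_neg (fun hy => hc ((h ω' ω).mpr hy))]

lemma shEnt_congr [Fintype α] [DecidableEq α] [Fintype β] [DecidableEq β]
    (p : Ω → ℝ) (X : Ω → α) (Y : Ω → β) (g : α → β) (h : β → α)
    (hg : ∀ ω, Y ω = g (X ω)) (hh : ∀ ω, X ω = h (Y ω)) :
    shEnt p X = shEnt p Y := by
  rw [shEnt_eq_sum, shEnt_eq_sum]
  congr 1
  refine Finset.sum_congr rfl fun ω _ => ?_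
  rw [probOf_congr p X Y
    (fun ω ω' => ⟨fun e => by rw [hg, hg, e], fun e => by rw [hh, hh, e]⟩) ω]

lemma sum_probOf_mul [Fintype α] [DecidableEq α] (p : Ω → ℝ) (V : Ω → α) (f : α → ℝ) :
    ∑ ω, p ω * f (V ω) = ∑ v, probOf p V v * f v := by
  unfold probOf
  calc ∑ ω, p ω * f (V ω)
      = ∑ ω, ∑ v, (if V ω = v then p ω * f v else 0) := by
        refine Finset.sum_congr rfl fun ω _ => ?_
        simp
    _ = ∑ v, ∑ ω, (if V ω = v then p ω * f v else 0) := Finset.sum_comm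
    _ = ∑ v, (∑ ω, if V ω = v then p ω else 0) * f v := by
        refine Finset.sum_congr rfl fun v _ => ?_
        rw [Finset.sum_mul]
        refine Finset.sum_congr rfl fun ω _ => ?_
        split_ifs <;> ring

lemma sum_probOf [Fintype α] [DecidableEq α] (p : Ω → ℝ) (V : Ω → α) :
    ∑ v, probOf p V v = ∑ ω, p ω := by
  unfold probOf
  rw [Finset.sum_comm]
  exact Finset.sum_congr rfl fun ω _ => by simp

lemma probOf_le [DecidableEq α] [DecidableEq β] (p : Ω → ℝ) (hp0 : ∀ ω, 0 ≤ p ω)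
    (V : Ω → α) (W : Ω → β) (g : α → β) (hg : ∀ ω, W ω = g (V ω)) (v : α) :
    probOf p V v ≤ probOf p W (g v) := by
  refine Finset.sum_le_sum fun ω _ => ?_
  by_cases h : V ω = v
  · rw [if_pos h, if_pos (by rw [hg, h])]
  · rw [if_neg h]
    split_ifs
    · exact hp0 ω
    · exact le_refl 0

lemma le_probOf_self [DecidableEq α] (p : Ω → ℝ) (hp0 : ∀ ω, 0 ≤ p ω) (V : Ω → α) (ω : Ω) :
    p ω ≤ probOf p V (V ω) := by
  have h : ∀ ω' ∈ Finset.univ, (0:ℝ) ≤ if V ω' = V ω then p ω' else 0 := by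
    intro ω' _
    split_ifs
    · exact hp0 ω'
    · exact le_refl 0
  have := Finset.single_le_sum h (Finset.mem_univ ω)
  simpa [probOf] using this

lemma probOf_fst_marginal [Fintype α] [DecidableEq α] [DecidableEq γ] (p : Ω → ℝ)
    (X : Ω → α) (Z : Ω → γ) (z : γ) :
    ∑ a, probOf p (fun ω => (X ω, Z ω)) (a, z) = probOf p Z z := by
  unfold probOf
  rw [Finset.sum_comm]
  refine Finset.sum_congr rfl fun ω _ => ?_
  by_cases h : Z ω = z
  · simp [Prod.ext_iff, h]
  · simp [Prod.ext_iff, h]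

end

section
variable {Ω α β γ δ σ : Type*} [Fintype Ω]
  [Fintype α] [DecidableEq α] [Fintype β] [DecidableEq β]
  [Fintype γ] [DecidableEq γ] [Fintype δ] [DecidableEq δ]
  [Fintype σ] [DecidableEq σ]

lemma condMutInfo_def' (p : Ω → ℝ) (X : Ω → α) (Y : Ω → β) (Z : Ω → γ) :
    condMutInfo p X Y Z =
      shEnt p (fun ω => (X ω, Z ω)) - shEnt p Z
        - shEnt p (fun ω => (X ω, (Y ω, Z ω))) + shEnt p (fun ω => (Y ω, Z ω)) := by
  unfold condMutInfo condEnt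
  ring

lemma condMutInfo_congr {α' β' γ' : Type*}
    [Fintype α'] [DecidableEq α'] [Fintype β'] [DecidableEq β'] [Fintype γ'] [DecidableEq γ']
    (p : Ω → ℝ) (X : Ω → α) (X' : Ω → α') (Y : Ω → β) (Y' : Ω → β') (Z : Ω → γ) (Z' : Ω → γ')
    (gX : α → α') (hX : α' → α) (gY : β → β') (hY : β' → β) (gZ : γ → γ') (hZ : γ' → γ)
    (hgX : ∀ ω, X' ω = gX (X ω)) (hhX : ∀ ω, X ω = hX (X' ω))
    (hgY : ∀ ω, Y' ω = gY (Y ω)) (hhY : ∀ ω, Y ω = hY (Y' ω))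
    (hgZ : ∀ ω, Z' ω = gZ (Z ω)) (hhZ : ∀ ω, Z ω = hZ (Z' ω)) :
    condMutInfo p X Y Z = condMutInfo p X' Y' Z' := by
  rw [condMutInfo_def', condMutInfo_def']
  have h1 : shEnt p (fun ω => (X ω, Z ω)) = shEnt p (fun ω => (X' ω, Z' ω)) :=
    shEnt_congr p _ _ (Prod.map gX gZ) (Prod.map hX hZ)
      (fun ω => by simp [Prod.map, hgX ω, hgZ ω])
      (fun ω => by simp [Prod.map]
                   exact ⟨hhX ω, hhZ ω⟩)
  have h2 : shEnt p Z = shEnt p Z' := shEnt_congr p _ _ gZ hZ hgZ hhZ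
  have h3 : shEnt p (fun ω => (X ω, (Y ω, Z ω)))
      = shEnt p (fun ω => (X' ω, (Y' ω, Z' ω))) :=
    shEnt_congr p _ _ (Prod.map gX (Prod.map gY gZ)) (Prod.map hX (Prod.map hY hZ))
      (fun ω => by simp [Prod.map, hgX ω, hgY ω, hgZ ω])
      (fun ω => by simp [Prod.map]
                   exact ⟨hhX ω, hhY ω, hhZ ω⟩)
  have h4 : shEnt p (fun ω => (Y ω, Z ω)) = shEnt p (fun ω => (Y' ω, Z' ω)) :=
    shEnt_congr p _ _ (Prod.map gY gZ) (Prod.map hY hZ)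
      (fun ω => by simp [Prod.map, hgY ω, hgZ ω])
      (fun ω => by simp [Prod.map]
                   exact ⟨hhY ω, hhZ ω⟩)
  rw [h1, h2, h3, h4]

lemma condMutInfo_chain (p : Ω → ℝ) (X : Ω → α) (A : Ω → β) (B : Ω → γ) (Z : Ω → δ) :
    condMutInfo p X (fun ω => (A ω, B ω)) Z
      = condMutInfo p X A Z + condMutInfo p X B (fun ω => (A ω, Z ω)) := by
  rw [condMutInfo_def', condMutInfo_def', condMutInfo_def']
  have h1 : shEnt p (fun ω => (X ω, ((A ω, B ω), Z ω)))
      = shEnt p (fun ω => (X ω, (B ω, (A ω, Z ω)))) :=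
    shEnt_congr p _ _ (fun q => (q.1, (q.2.1.2, (q.2.1.1, q.2.2))))
      (fun q => (q.1, ((q.2.2.1, q.2.1), q.2.2.2))) (fun ω => rfl) (fun ω => rfl)
  have h2 : shEnt p (fun ω => ((A ω, B ω), Z ω))
      = shEnt p (fun ω => (B ω, (A ω, Z ω))) :=
    shEnt_congr p _ _ (fun q => (q.1.2, (q.1.1, q.2))) (fun q => ((q.2.1, q.1), q.2.2))
      (fun ω => rfl) (fun ω => rfl)
  linarith

lemma condMutInfo_symm (p : Ω → ℝ) (X : Ω → α) (Y : Ω → β) (Z : Ω → γ) :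
    condMutInfo p X Y Z = condMutInfo p Y X Z := by
  rw [condMutInfo_def', condMutInfo_def']
  have h : shEnt p (fun ω => (X ω, (Y ω, Z ω))) = shEnt p (fun ω => (Y ω, (X ω, Z ω))) :=
    shEnt_congr p _ _ (fun q => (q.2.1, (q.1, q.2.2))) (fun q => (q.2.1, (q.1, q.2.2)))
      (fun ω => rfl) (fun ω => rfl)
  linarith

lemma condMutInfo_split (p : Ω → ℝ) (S : Ω → σ) (W : Ω → β) (U : Ω → γ) (Z : Ω → δ)
    (w : σ → β) (hW : ∀ ω, W ω = w (S ω)) :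
    condMutInfo p S U Z
      = condMutInfo p W U Z + condMutInfo p S U (fun ω => (W ω, Z ω)) := by
  have e1 : condMutInfo p S U Z = condMutInfo p (fun ω => (W ω, S ω)) U Z :=
    condMutInfo_congr p S _ U U Z Z (fun s => (w s, s)) Prod.snd id id id id
      (fun ω => by simp [hW ω]) (fun ω => rfl) (fun ω => rfl) (fun ω => rfl)
      (fun ω => rfl) (fun ω => rfl)
  rw [e1, condMutInfo_symm p _ U Z, condMutInfo_chain,
    condMutInfo_symm p U W Z, condMutInfo_symm p U S _]

lemma condMutInfo_nonneg (p : Ω → ℝ) (hp0 : ∀ ω, 0 ≤ p ω) (hp1 : ∑ ω, p ω = 1)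
    (X : Ω → α) (Y : Ω → β) (Z : Ω → γ) : 0 ≤ condMutInfo p X Y Z := by
  classical
  set V : Ω → α × β × γ := fun ω => (X ω, (Y ω, Z ω)) with hVdef
  set qa : α × β × γ → ℝ := fun v => probOf p (fun ω => (X ω, Z ω)) (v.1, v.2.2) with hqa
  set qb : α × β × γ → ℝ := fun v => probOf p (fun ω => (Y ω, Z ω)) v.2 with hqb
  set qc : α × β × γ → ℝ := fun v => probOf p V v with hqc
  set qd : α × β × γ → ℝ := fun v => probOf p Z v.2.2 with hqd
  -- pointwise inequality
  have hka : ∀ v, qc v ≤ qa v := fun v =>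
    probOf_le p hp0 V (fun ω => (X ω, Z ω)) (fun v => (v.1, v.2.2)) (fun ω => rfl) v
  have hkb : ∀ v, qc v ≤ qb v := fun v =>
    probOf_le p hp0 V (fun ω => (Y ω, Z ω)) (fun v => v.2) (fun ω => rfl) v
  have hkd : ∀ v, qc v ≤ qd v := fun v =>
    probOf_le p hp0 V Z (fun v => v.2.2) (fun ω => rfl) v
  have hqc0 : ∀ v, 0 ≤ qc v := fun v => probOf_nonneg p hp0 V v
  have hqa0 : ∀ v, 0 ≤ qa v := fun v => probOf_nonneg p hp0 _ _
  have hqb0 : ∀ v, 0 ≤ qb v := fun v => probOf_nonneg p hp0 _ _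
  have hqd0 : ∀ v, 0 ≤ qd v := fun v => probOf_nonneg p hp0 _ _
  have key : ∀ ω, p ω - p ω * ((qa (V ω) * qb (V ω)) / (qc (V ω) * qd (V ω)))
      ≤ p ω * Real.log (qc (V ω)) + p ω * Real.log (qd (V ω))
        - p ω * Real.log (qa (V ω)) - p ω * Real.log (qb (V ω)) := by
    intro ω
    rcases eq_or_lt_of_le (hp0 ω) with h | h
    · simp [← h]
    · have hc : 0 < qc (V ω) := lt_of_lt_of_le h (le_probOf_self p hp0 V ω)
      have ha : 0 < qa (V ω) := lt_of_lt_of_le hc (hka _)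
      have hb : 0 < qb (V ω) := lt_of_lt_of_le hc (hkb _)
      have hd : 0 < qd (V ω) := lt_of_lt_of_le hc (hkd _)
      have ht : 0 < (qa (V ω) * qb (V ω)) / (qc (V ω) * qd (V ω)) := by positivity
      have hlog := Real.log_le_sub_one_of_pos ht
      rw [Real.log_div (by positivity) (by positivity), Real.log_mul ha.ne' hb.ne',
        Real.log_mul hc.ne' hd.ne'] at hlog
      nlinarith [hlog, h.le]
  -- summing
  have hsum := Finset.sum_le_sum (fun ω (_ : ω ∈ Finset.univ) => key ω)
  -- identify the RHS sum with condMutInfo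
  have hrhs : ∑ ω, (p ω * Real.log (qc (V ω)) + p ω * Real.log (qd (V ω))
        - p ω * Real.log (qa (V ω)) - p ω * Real.log (qb (V ω)))
      = condMutInfo p X Y Z := by
    rw [condMutInfo_def', shEnt_eq_sum, shEnt_eq_sum, shEnt_eq_sum, shEnt_eq_sum]
    simp only [Finset.sum_sub_distrib, Finset.sum_add_distrib]
    ring
  -- bound the LHS sum below by 0
  have hT : ∑ ω, p ω * ((qa (V ω) * qb (V ω)) / (qc (V ω) * qd (V ω))) ≤ 1 := by
    rw [sum_probOf_mul p V (fun v => (qa v * qb v) / (qc v * qd v))]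
    have step1 : ∀ v, probOf p V v * ((qa v * qb v) / (qc v * qd v))
        ≤ qa v * qb v / qd v := by
      intro v
      rcases eq_or_lt_of_le (hqc0 v) with h | h
      · have h0 : probOf p V v = 0 := h.symm
        rw [h0, zero_mul]
        exact div_nonneg (mul_nonneg (hqa0 v) (hqb0 v)) (hqd0 v)
      · have hdv : 0 < qd v := lt_of_lt_of_le h (hkd v)
        rw [show probOf p V v = qc v from rfl]
        rw [show qc v * ((qa v * qb v) / (qc v * qd v)) = qa v * qb v / qd v by
          field_simp]
    calc ∑ v, probOf p V v * ((qa v * qb v) / (qc v * qd v))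
        ≤ ∑ v, qa v * qb v / qd v := Finset.sum_le_sum fun v _ => step1 v
      _ ≤ 1 := by
          have inner : ∀ yz : β × γ, (∑ x, qa (x, yz) * qb (x, yz) / qd (x, yz))
              ≤ probOf p (fun ω => (Y ω, Z ω)) yz := by
            intro yz
            have e1 : ∀ x : α, qa (x, yz) * qb (x, yz) / qd (x, yz)
                = probOf p (fun ω => (X ω, Z ω)) (x, yz.2)
                  * (probOf p (fun ω => (Y ω, Z ω)) yz / probOf p Z yz.2) := by
              intro x
              rw [hqa, hqb, hqd]
              dsimp only
              rw [mul_div_assoc]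
            rw [Finset.sum_congr rfl (fun x _ => e1 x), ← Finset.sum_mul,
              probOf_fst_marginal p X Z yz.2]
            rcases eq_or_lt_of_le (probOf_nonneg p hp0 Z yz.2) with h | h
            · rw [← h, zero_mul]
              exact probOf_nonneg p hp0 _ _
            · rw [mul_comm, div_mul_cancel₀ _ h.ne']
          calc ∑ v : α × β × γ, qa v * qb v / qd v
              = ∑ x : α, ∑ yz : β × γ, qa (x, yz) * qb (x, yz) / qd (x, yz) := by
                rw [Fintype.sum_prod_type]
            _ = ∑ yz : β × γ, ∑ x : α, qa (x, yz) * qb (x, yz) / qd (x, yz) :=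
                Finset.sum_comm
            _ ≤ ∑ yz : β × γ, probOf p (fun ω => (Y ω, Z ω)) yz :=
                Finset.sum_le_sum fun yz _ => inner yz
            _ = 1 := by rw [sum_probOf, hp1]
  have hL : (0:ℝ) ≤ ∑ ω, (p ω - p ω * ((qa (V ω) * qb (V ω)) / (qc (V ω) * qd (V ω)))) := by
    rw [Finset.sum_sub_distrib, hp1]
    linarith [hT]
  linarith [hsum, hL, hrhs.symm.le, hrhs.le]

end

lemma snoc_eq {Ω δ : Type*} (G : ℕ → Ω → δ) (n : ℕ) (ω : Ω) :
    (Fin.snoc (fun t : Fin n => G t.val ω) (G n ω) : Fin (n + 1) → δ)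
      = fun t : Fin (n + 1) => G t.val ω := by
  funext t
  induction t using Fin.lastCases with
  | last => simp
  | cast i => simp

section Main
variable {Ω σT υ αT βT : Type*} [Fintype Ω] [Fintype σT] [DecidableEq σT]
    [Fintype υ] [DecidableEq υ] [Fintype αT] [DecidableEq αT] [Fintype βT] [DecidableEq βT]

lemma Kval_step (p : Ω → ℝ) (hp0 : ∀ ω, 0 ≤ p ω) (hp1 : ∑ ω, p ω = 1)
    (m : ℕ) (S : Ω → σT) (U : ℕ → Ω → υ) (Y : ℕ → Ω → αT) (F : ℕ → Ω → βT)
    (ymap : ℕ → σT → αT) (fmap : ℕ → σT → βT)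
    (hY : ∀ i ω, Y i ω = ymap i (S ω)) (hF : ∀ i ω, F i ω = fmap i (S ω))
    (n : ℕ) (hm : n + 2 ≤ m) :
    Kval p m S U Y F (n + 2) ≤ Kval p m S U Y F (n + 1) := by
  have e1 : Kval p m S U Y F (n + 2)
      = (∑ i ∈ Finset.range (n + 1),
          condMutInfo p (F i) (fun ω => fun t : Fin (i + 1) => U t.val ω)
            (fun ω => ((fun t : Fin (i + 1) => Y t.val ω), (fun t : Fin i => F t.val ω))))
        + condMutInfo p S (fun ω => fun t : Fin (n + 1 + 1) => U t.val ω)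
            (fun ω => ((fun t : Fin (n + 1 + 1) => Y t.val ω),
              (fun t : Fin (n + 1) => F t.val ω)))
        + ∑ i ∈ Finset.Ico (n + 1 + 1) m,
            condMutInfo p S (U i)
              (fun ω => ((fun t : Fin (i + 1) => Y t.val ω),
                (fun t : Fin i => U t.val ω))) := rfl
  have e2 : Kval p m S U Y F (n + 1)
      = (∑ i ∈ Finset.range n,
          condMutInfo p (F i) (fun ω => fun t : Fin (i + 1) => U t.val ω)
            (fun ω => ((fun t : Fin (i + 1) => Y t.val ω), (fun t : Fin i => F t.val ω))))
        + condMutInfo p S (fun ω => fun t : Fin (n + 1) => U t.val ω)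
            (fun ω => ((fun t : Fin (n + 1) => Y t.val ω),
              (fun t : Fin n => F t.val ω)))
        + ∑ i ∈ Finset.Ico (n + 1) m,
            condMutInfo p S (U i)
              (fun ω => ((fun t : Fin (i + 1) => Y t.val ω),
                (fun t : Fin i => U t.val ω))) := rfl
  rw [e1, e2, Finset.sum_range_succ,
    Finset.sum_eq_sum_Ico_succ_bot (by omega : n + 1 < m)]
  -- key A : M1 = T_n + M'
  have keyA : condMutInfo p S (fun ω => fun t : Fin (n+1) => U t.val ω)
        (fun ω => ((fun t : Fin (n+1) => Y t.val ω), (fun t : Fin n => F t.val ω)))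
      = condMutInfo p (F n) (fun ω => fun t : Fin (n+1) => U t.val ω)
          (fun ω => ((fun t : Fin (n+1) => Y t.val ω), (fun t : Fin n => F t.val ω)))
        + condMutInfo p S (fun ω => fun t : Fin (n+1) => U t.val ω)
          (fun ω => ((fun t : Fin (n+1) => Y t.val ω), (fun t : Fin (n+1) => F t.val ω))) := by
    rw [condMutInfo_split p S (F n) _ _ (fmap n) (fun ω => hF n ω)]
    congr 1
    refine condMutInfo_congr p S S _ _ _ _ id id id id
      (fun q => (q.2.1, Fin.snoc q.2.2 q.1))
      (fun q => (q.2 (Fin.last n), (q.1, fun t => q.2 t.castSucc)))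
      (fun ω => rfl) (fun ω => rfl) (fun ω => rfl) (fun ω => rfl)
      (fun ω => ?_) (fun ω => rfl)
    exact congrArg (fun x => ((fun t : Fin (n+1) => Y t.val ω), x)) (snoc_eq F n ω).symm
  -- key B : M2 = B1 + B2
  have keyB : condMutInfo p S (fun ω => fun t : Fin (n+1+1) => U t.val ω)
        (fun ω => ((fun t : Fin (n+1+1) => Y t.val ω), (fun t : Fin (n+1) => F t.val ω)))
      = condMutInfo p S (fun ω => fun t : Fin (n+1) => U t.val ω)
          (fun ω => ((fun t : Fin (n+1+1) => Y t.val ω), (fun t : Fin (n+1) => F t.val ω)))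
        + condMutInfo p S (U (n+1))
          (fun ω => ((fun t : Fin (n+1) => U t.val ω),
            ((fun t : Fin (n+1+1) => Y t.val ω), (fun t : Fin (n+1) => F t.val ω)))) := by
    have e : condMutInfo p S (fun ω => fun t : Fin (n+1+1) => U t.val ω)
          (fun ω => ((fun t : Fin (n+1+1) => Y t.val ω), (fun t : Fin (n+1) => F t.val ω)))
        = condMutInfo p S
            (fun ω => ((fun t : Fin (n+1) => U t.val ω), U (n+1) ω))
            (fun ω => ((fun t : Fin (n+1+1) => Y t.val ω), (fun t : Fin (n+1) => F t.val ω))) := by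
      refine condMutInfo_congr p S S _ _ _ _ id id
        (fun u => ((fun t : Fin (n+1) => u t.castSucc), u (Fin.last (n+1))))
        (fun q => Fin.snoc q.1 q.2) id id
        (fun ω => rfl) (fun ω => rfl) (fun ω => rfl) (fun ω => (snoc_eq U (n+1) ω).symm)
        (fun ω => rfl) (fun ω => rfl)
    rw [e, condMutInfo_chain]
  -- key C : B1 ≤ M'
  have keyC : condMutInfo p S (fun ω => fun t : Fin (n+1) => U t.val ω)
        (fun ω => ((fun t : Fin (n+1+1) => Y t.val ω), (fun t : Fin (n+1) => F t.val ω)))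
      ≤ condMutInfo p S (fun ω => fun t : Fin (n+1) => U t.val ω)
        (fun ω => ((fun t : Fin (n+1) => Y t.val ω), (fun t : Fin (n+1) => F t.val ω))) := by
    rw [condMutInfo_split p S (Y (n+1)) (fun ω => fun t : Fin (n+1) => U t.val ω)
      (fun ω => ((fun t : Fin (n+1) => Y t.val ω), (fun t : Fin (n+1) => F t.val ω)))
      (ymap (n+1)) (fun ω => hY (n+1) ω)]
    have e2 : condMutInfo p S (fun ω => fun t : Fin (n+1) => U t.val ω)
          (fun ω => (Y (n+1) ω,
            ((fun t : Fin (n+1) => Y t.val ω), (fun t : Fin (n+1) => F t.val ω))))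
        = condMutInfo p S (fun ω => fun t : Fin (n+1) => U t.val ω)
          (fun ω => ((fun t : Fin (n+1+1) => Y t.val ω), (fun t : Fin (n+1) => F t.val ω))) := by
      refine condMutInfo_congr p S S _ _ _ _ id id id id
        (fun q => (Fin.snoc q.2.1 q.1, q.2.2))
        (fun q => (q.1 (Fin.last (n+1)), ((fun t => q.1 t.castSucc), q.2)))
        (fun ω => rfl) (fun ω => rfl) (fun ω => rfl) (fun ω => rfl)
        (fun ω => ?_) (fun ω => rfl)
      exact congrArg (fun x => (x, (fun t : Fin (n+1) => F t.val ω))) (snoc_eq Y (n+1) ω).symm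
    rw [e2]
    have := condMutInfo_nonneg p hp0 hp1 (Y (n+1))
      (fun ω => fun t : Fin (n+1) => U t.val ω)
      (fun ω => ((fun t : Fin (n+1) => Y t.val ω), (fun t : Fin (n+1) => F t.val ω)))
    linarith
  -- key D : B2 ≤ R
  have keyD : condMutInfo p S (U (n+1))
        (fun ω => ((fun t : Fin (n+1) => U t.val ω),
          ((fun t : Fin (n+1+1) => Y t.val ω), (fun t : Fin (n+1) => F t.val ω))))
      ≤ condMutInfo p S (U (n+1))
        (fun ω => ((fun t : Fin (n+1+1) => Y t.val ω), (fun t : Fin (n+1) => U t.val ω))) := by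
    rw [condMutInfo_split p S (fun ω => fun t : Fin (n+1) => F t.val ω) (U (n+1))
      (fun ω => ((fun t : Fin (n+1+1) => Y t.val ω), (fun t : Fin (n+1) => U t.val ω)))
      (fun s => fun t : Fin (n+1) => fmap t.val s)
      (fun ω => funext fun t => hF t.val ω)]
    have e3 : condMutInfo p S (U (n+1))
          (fun ω => ((fun t : Fin (n+1) => F t.val ω),
            ((fun t : Fin (n+1+1) => Y t.val ω), (fun t : Fin (n+1) => U t.val ω))))
        = condMutInfo p S (U (n+1))
          (fun ω => ((fun t : Fin (n+1) => U t.val ω),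
            ((fun t : Fin (n+1+1) => Y t.val ω), (fun t : Fin (n+1) => F t.val ω)))) := by
      exact condMutInfo_congr p S S _ _ _ _ id id id id
        (fun q => (q.2.2, (q.2.1, q.1))) (fun q => (q.2.2, (q.2.1, q.1)))
        (fun ω => rfl) (fun ω => rfl) (fun ω => rfl) (fun ω => rfl)
        (fun ω => rfl) (fun ω => rfl)
    rw [e3]
    have := condMutInfo_nonneg p hp0 hp1 (fun ω => fun t : Fin (n+1) => F t.val ω) (U (n+1))
      (fun ω => ((fun t : Fin (n+1+1) => Y t.val ω), (fun t : Fin (n+1) => U t.val ω)))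
    linarith
  rw [keyB, keyA]
  linarith [keyC, keyD]

end Main


/-- if each side information `Y i` and each demand `F i` is a deterministic
function of the source `S`, then `K_1 ≥ K_2 ≥ ⋯ ≥ K_m`. -/
theorem Kval_antitone {Ω σT υ αT βT : Type*} [Fintype Ω] [Fintype σT] [DecidableEq σT]
    [Fintype υ] [DecidableEq υ] [Fintype αT] [DecidableEq αT] [Fintype βT] [DecidableEq βT]
    (p : Ω → ℝ) (hp0 : ∀ ω, 0 ≤ p ω) (hp1 : ∑ ω, p ω = 1)
    (m : ℕ) (S : Ω → σT) (U : ℕ → Ω → υ) (Y : ℕ → Ω → αT) (F : ℕ → Ω → βT)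
    (ymap : ℕ → σT → αT) (fmap : ℕ → σT → βT)
    (hY : ∀ i ω, Y i ω = ymap i (S ω)) (hF : ∀ i ω, F i ω = fmap i (S ω)) :
    ∀ j k : ℕ, 1 ≤ j → j ≤ k → k ≤ m →
      Kval p m S U Y F k ≤ Kval p m S U Y F j := by
  intro j k hj hjk
  induction k, hjk using Nat.le_induction with
  | base => intro _; exact le_rfl
  | succ k hk ih =>
      intro hkm
      have h2 : 1 ≤ k := le_trans hj hk
      obtain ⟨n, rfl⟩ : ∃ n, k = n + 1 := ⟨k - 1, by omega⟩
      exact le_trans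
        (Kval_step p hp0 hp1 m S U Y F ymap fmap hY hF n (by omega))
        (ih (by omega))
end

section
/- Let $S$ be a finite set of source bits, $m \ge 1$, with demand sets $f_i \subseteq S$ and side-information sets $Y_i \subseteq S$ ($f_i \cap Y_i = \emptyset$). Suppose every bit of $S$ is demanded by at least one decoder and the instance satisfies the covering condition: every $s \in S$ lies in $Y_i$ for either all $i$, no $i$, all but one $i$, or all but two $i$. For $i \in \{1,\dots,m\}$ let $g_i = f_i \setminus \{ s \in f_i : s \text{ is demanded only by decoder } i \text{ and is side information at exactly } m-2 \text{ decoders} \}$, and for $i \ne j$ let $a_{ij} = \{s \in S : s \text{ is demanded only by decoder } j \text{ and } s \notin Y_i \cup Y_j,\ s \in Y_k \ \forall k \notin \{i,j\}\}$. Then the quantity $R_i = |(g_1 \cup \cdots \cup g_{i-1} \cup f_i \cup g_{i+1} \cup \cdots \cup g_m) \setminus Y_i| + \max_{j \ne i} |a_{ij}|$ satisfies: $\max_i R_i$ is a lower bound on the size of any zero-error index code message alphabet exponent, i.e., for every function $\phi : (\mathbb{Z}/2)^S \to T$ and decoding functions $g_i$ with $g_i(\phi(x), x|_{Y_i}) =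 x|_{f_i}$ for all $x$, one has $\log_2 |T| \ge \max_i R_i$. -/
open Finset

private lemma card_le_logb_aux {T : Type*} [Fintype T] {n : ℕ}
    (h : 2 ^ n ≤ Fintype.card T) :
    (n : ℝ) ≤ Real.logb 2 (Fintype.card T) := by
  have h1 : ((2 : ℝ) ^ n) ≤ (Fintype.card T : ℝ) := by exact_mod_cast h
  have h2 : (n : ℝ) = Real.logb 2 ((2 : ℝ) ^ n) := by
    rw [Real.logb_pow, Real.logb_self_eq_one (by norm_num : (1:ℝ) < 2), mul_one]
  rw [h2]
  exact Real.logb_le_logb_of_le (by norm_num) (by positivity) h1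

/-- converse of Theorem 4 for instances where every source bit is side
information at all, none, all but one, or all but two of the `m` decoders. For every
zero-error index code `(φ, dec)` and every decoder `i`, the quantity
`R_i = |(g_1 ∪ ⋯ ∪ g_{i-1} ∪ f_i ∪ g_{i+1} ∪ ⋯ ∪ g_m) \ Y_i| + max_{j ≠ i} |a_{ij}|`
is a lower bound on `log₂ |T|`; hence `max_i R_i ≤ log₂ |T|`. Here
`g_t = f_t` minus the bits demanded only by `t` that are side information at exactly
`m-2` decoders, and `a_{ij}` is the set of bits demanded only by `j`, not side
information at `i` or `j`, and side information at every other decoder. -/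
theorem zero_error_converse_G0_Gm_Gm1_Gm2 {σ : Type*} [Fintype σ] [DecidableEq σ]
    (m : ℕ) (hm : 1 ≤ m) (f Y : Fin m → Finset σ)
    (hdisj : ∀ i, Disjoint (f i) (Y i))
    (hdem : ∀ s : σ, ∃ i, s ∈ f i)
    (hcover : ∀ s : σ,
      (univ.filter (fun i => s ∈ Y i)).card = 0 ∨
      (univ.filter (fun i => s ∈ Y i)).card = m ∨
      (univ.filter (fun i => s ∈ Y i)).card = m - 1 ∨
      (univ.filter (fun i => s ∈ Y i)).card = m - 2)
    (T : Type*) [Fintype T]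
    (φ : (σ → ZMod 2) → T)
    (dec : (i : Fin m) → T → ({s : σ // s ∈ Y i} → ZMod 2) → ({s : σ // s ∈ f i} → ZMod 2))
    (hdec : ∀ i x, dec i (φ x) (fun s => x s.1) = fun s => x s.1) :
    ∀ i : Fin m,
      (((univ.biUnion (fun t : Fin m =>
          if t = i then f i
          else (f t).filter (fun s => ¬ ((∀ u, s ∈ f u → u = t) ∧
            (univ.filter (fun u => s ∈ Y u)).card = m - 2)))) \ Y i).card : ℝ)
      + (((univ.erase i).sup (fun j =>
          (univ.filter (fun s : σ =>
            s ∈ f j ∧ (∀ u, s ∈ f u → u = j) ∧ s ∉ Y i ∧ s ∉ Y j ∧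
            ∀ u, u ≠ i → u ≠ j → s ∈ Y u)).card) : ℕ) : ℝ)
      ≤ Real.logb 2 (Fintype.card T) := by
  classical
  intro i
  set B : Finset σ := ((univ.biUnion (fun t : Fin m =>
      if t = i then f i
      else (f t).filter (fun s => ¬ ((∀ u, s ∈ f u → u = t) ∧
        (univ.filter (fun u => s ∈ Y u)).card = m - 2)))) \ Y i) with hBdef
  -- Key structural fact: every bit of `B` outside `f i` is side information nowhere.
  have hB0 : ∀ s ∈ B, s ∉ f i → ∀ u : Fin m, s ∉ Y u := by
    intro s hs hsfi u hu
    rw [hBdef, mem_sdiff, mem_biUnion] at hs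
    obtain ⟨⟨t, -, hst⟩, hsYi⟩ := hs
    by_cases hti : t = i
    · rw [if_pos hti] at hst; exact hsfi hst
    rw [if_neg hti, mem_filter] at hst
    obtain ⟨hsft, hnot⟩ := hst
    have hsYt : s ∉ Y t := fun h => (Finset.disjoint_left.mp (hdisj t)) hsft h
    have hm2 : 2 ≤ m := by
      have hiv := i.isLt; have htv := t.isLt
      have : t.val ≠ i.val := fun h => hti (Fin.ext h)
      omega
    have hsub : univ.filter (fun u => s ∈ Y u) ⊆ (univ.erase i).erase t := by
      intro u hu
      rw [mem_filter] at hu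
      rw [mem_erase, mem_erase]
      refine ⟨fun h => hsYt (h ▸ hu.2), fun h => hsYi (h ▸ hu.2), mem_univ u⟩
    have hcard2 : ((univ.erase i).erase t).card = m - 2 := by
      rw [card_erase_of_mem (by simp [hti]), card_erase_of_mem (mem_univ i),
        card_univ, Fintype.card_fin]
      omega
    have hle : (univ.filter (fun u => s ∈ Y u)).card ≤ m - 2 := by
      rw [← hcard2]; exact card_le_card hsub
    have hpos : 1 ≤ (univ.filter (fun u => s ∈ Y u)).card :=
      card_pos.mpr ⟨u, mem_filter.mpr ⟨mem_univ u, hu⟩⟩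
    rcases hcover s with h0 | h0 | h0 | h0
    · omega
    · omega
    · omega
    · -- count = m - 2 : the filter equals `(univ.erase i).erase t`, and `s` is demanded
      -- only by `t`, contradicting membership in `g t`.
      have heq : univ.filter (fun u => s ∈ Y u) = (univ.erase i).erase t :=
        eq_of_subset_of_card_le hsub (by omega)
      apply hnot
      refine ⟨fun u' hu' => ?_, h0⟩
      by_contra hut
      have hu'i : u' ≠ i := fun h => hsfi (h ▸ hu')
      have : u' ∈ univ.filter (fun u => s ∈ Y u) := by
        rw [heq, mem_erase, mem_erase]; exact ⟨hut, hu'i, mem_univ u'⟩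
      exact (Finset.disjoint_left.mp (hdisj u')) hu' (mem_filter.mp this).2
  -- The common chain argument: any set `A ⊆ f j` of bits avoiding `Y i` and `Y j`,
  -- disjoint from `B`, contributes together with `B` to a fooling set.
  have key : ∀ (j : Fin m) (A : Finset σ), A ⊆ f j →
      (∀ s ∈ A, s ∉ Y i ∧ s ∉ Y j) → Disjoint B A →
      ((B.card + A.card : ℕ) : ℝ) ≤ Real.logb 2 (Fintype.card T) := by
    intro j A hAfj hAY hdisjBA
    set C := B ∪ A with hC
    -- the fooling-set map
    set e : (({s : σ // s ∈ C} → ZMod 2)) → T :=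
      fun v => φ (fun s => if h : s ∈ C then v ⟨s, h⟩ else 0) with he
    have hinj : Function.Injective e := by
      intro v w hvw
      set xv : σ → ZMod 2 := fun s => if h : s ∈ C then v ⟨s, h⟩ else 0 with hxv
      set xw : σ → ZMod 2 := fun s => if h : s ∈ C then w ⟨s, h⟩ else 0 with hxw
      have hout : ∀ s, s ∉ C → xv s = xw s := by
        intro s hs; rw [hxv, hxw]; simp [dif_neg hs]
      -- one decoding step
      have step : ∀ t : Fin m, (∀ s ∈ Y t, xv s = xw s) → ∀ s ∈ f t, xv s = xw s := by
        intro t hYt s hs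
        have e1 := congrFun (hdec t xv) ⟨s, hs⟩
        have e2 := congrFun (hdec t xw) ⟨s, hs⟩
        have hYeq : (fun u : {s : σ // s ∈ Y t} => xv u.1) =
            (fun u : {s : σ // s ∈ Y t} => xw u.1) :=
          funext fun u => hYt u.1 u.2
        have : φ xv = φ xw := hvw
        rw [this, hYeq] at e1
        exact e1.symm.trans e2
      -- step 1: decoder i recovers f i
      have h1 : ∀ s ∈ f i, xv s = xw s := by
        apply step
        intro s hsYi
        apply hout
        intro hsC
        rcases mem_union.mp hsC with hsB | hsA
        · exact (mem_sdiff.mp (hBdef ▸ hsB)).2 hsYi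
        · exact (hAY s hsA).1 hsYi
      -- step 2: decoder j recovers f j ⊇ A
      have h2 : ∀ s ∈ f j, xv s = xw s := by
        apply step
        intro s hsYj
        by_cases hsC : s ∈ C
        · rcases mem_union.mp hsC with hsB | hsA
          · by_cases hsfi : s ∈ f i
            · exact h1 s hsfi
            · exact absurd hsYj (hB0 s hsB hsfi j)
          · exact absurd hsYj (hAY s hsA).2
        · exact hout s hsC
      -- step 3: every remaining bit of B is recovered through some demanding decoder
      have h3 : ∀ s ∈ B, xv s = xw s := by
        intro s hsB
        by_cases hsfi : s ∈ f i
        · exact h1 s hsfi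
        obtain ⟨t, hst⟩ := hdem s
        refine step t ?_ s hst
        intro y hyYt
        by_cases hyC : y ∈ C
        · rcases mem_union.mp hyC with hyB | hyA
          · by_cases hyfi : y ∈ f i
            · exact h1 y hyfi
            · exact absurd hyYt (hB0 y hyB hyfi t)
          · exact h2 y (hAfj hyA)
        · exact hout y hyC
      -- conclude v = w
      funext u
      have : xv u.1 = xw u.1 := by
        rcases mem_union.mp u.2 with hB' | hA'
        · exact h3 u.1 hB'
        · exact h2 u.1 (hAfj hA')
      rw [hxv, hxw] at this
      simpa [dif_pos u.2] using this
    have hcardle : 2 ^ C.card ≤ Fintype.card T := by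
      have := Fintype.card_le_of_injective e hinj
      rwa [Fintype.card_fun, Fintype.card_coe, ZMod.card] at this
    have hCcard : C.card = B.card + A.card := card_union_of_disjoint hdisjBA
    exact card_le_logb_aux (hCcard ▸ hcardle)
  -- finish, splitting on whether there is any decoder other than `i`
  rcases (univ.erase i).eq_empty_or_nonempty with hne | hne
  · rw [hne, Finset.sup_empty]
    have := key i ∅ (empty_subset _) (by simp) (disjoint_empty_right B)
    push_cast at this ⊢
    simpa using this
  · obtain ⟨j, hjmem, hjsup⟩ := Finset.exists_mem_eq_sup (univ.erase i) hne
      (fun j => (univ.filter (fun s : σ =>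
        s ∈ f j ∧ (∀ u, s ∈ f u → u = j) ∧ s ∉ Y i ∧ s ∉ Y j ∧
        ∀ u, u ≠ i → u ≠ j → s ∈ Y u)).card)
    have hji : j ≠ i := (mem_erase.mp hjmem).1
    set A : Finset σ := univ.filter (fun s : σ =>
        s ∈ f j ∧ (∀ u, s ∈ f u → u = j) ∧ s ∉ Y i ∧ s ∉ Y j ∧
        ∀ u, u ≠ i → u ≠ j → s ∈ Y u) with hAdef
    have hAfj : A ⊆ f j := fun s hs => (mem_filter.mp hs).2.1
    have hAY : ∀ s ∈ A, s ∉ Y i ∧ s ∉ Y j := fun s hs =>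
      ⟨(mem_filter.mp hs).2.2.2.1, (mem_filter.mp hs).2.2.2.2.1⟩
    have hBA : Disjoint B A := by
      rw [Finset.disjoint_right]
      intro s hsA hsB
      obtain ⟨-, hsfj, honly, hsYi, hsYj, hrest⟩ := mem_filter.mp hsA
      rw [hBdef, mem_sdiff, mem_biUnion] at hsB
      obtain ⟨⟨t, -, hst⟩, -⟩ := hsB
      by_cases hti : t = i
      · rw [if_pos hti] at hst
        exact hji (honly i hst).symm
      rw [if_neg hti, mem_filter] at hst
      obtain ⟨hsft, hnot⟩ := hst
      have htj : t = j := honly t hsft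
      apply hnot
      subst htj
      refine ⟨honly, ?_⟩
      have heq : univ.filter (fun u => s ∈ Y u) = (univ.erase i).erase t := by
        ext u
        rw [mem_filter, mem_erase, mem_erase]
        constructor
        · rintro ⟨-, hu⟩
          exact ⟨fun h => hsYj (h ▸ hu), fun h => hsYi (h ▸ hu), mem_univ u⟩
        · rintro ⟨hut, hui, -⟩
          exact ⟨mem_univ u, hrest u hui hut⟩
      rw [heq, card_erase_of_mem (by simp [hti]), card_erase_of_mem (mem_univ i),
        card_univ, Fintype.card_fin]
      have hm2 : 2 ≤ m := by
        have hiv := i.isLt; have htv := t.isLt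
        have : t.val ≠ i.val := fun h => hti (Fin.ext h)
        omega
      omega
    have := key j A hAfj hAY hBA
    rw [hjsup]
    push_cast at this ⊢
    exact this
end

section
/- Let $S$ be a finite set, $m \ge 1$, demands $f_i \subseteq S$ and side information $Y_i \subseteq S$ with $f_i \cap Y_i = \emptyset$. For any zero-error index code $\phi : (\mathbb{Z}/2)^S \to T$ (decoders recover $x|_{f_i}$ from $\phi(x)$ and $x|_{Y_i}$) and any permutation $\sigma$ of $\{1,\dots,m\}$: $\log_2|T| \ge \sum_{i=1}^m \big| f_{\sigma(i)} \setminus \big( \bigcup_{j<i} f_{\sigma(j)} \cup \bigcup_{j \le i} Y_{\sigma(j)} \big) \big|$. -/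
open Finset

/-- zero-error expanding-sequence (DSM+) lower bound. For every
zero-error index code `(φ, dec)` and every permutation `σp` of the decoders,
`log₂ |T| ≥ ∑_i |f_{σ(i)} \ (∪_{j<i} f_{σ(j)} ∪ ∪_{j≤i} Y_{σ(j)})|`. -/
theorem zero_error_expanding_sequence_bound {σ : Type*} [Fintype σ] [DecidableEq σ]
    (m : ℕ) (f Y : Fin m → Finset σ)
    (hdisj : ∀ i, Disjoint (f i) (Y i))
    (T : Type*) [Fintype T]
    (φ : (σ → ZMod 2) → T)
    (dec : (i : Fin m) → T → ({s : σ // s ∈ Y i} → ZMod 2) → ({s : σ // s ∈ f i} → ZMod 2))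
    (hdec : ∀ i x, dec i (φ x) (fun s => x s.1) = fun s => x s.1) :
    ∀ σp : Equiv.Perm (Fin m),
      ((∑ i : Fin m,
        (f (σp i) \
          ((univ.filter (fun j => j < i)).biUnion (fun j => f (σp j)) ∪
           (univ.filter (fun j => j ≤ i)).biUnion (fun j => Y (σp j)))).card : ℕ) : ℝ)
      ≤ Real.logb 2 (Fintype.card T) := by
  intro σp
  set A : Fin m → Finset σ := fun i =>
    f (σp i) \
      ((univ.filter (fun j => j < i)).biUnion (fun j => f (σp j)) ∪
       (univ.filter (fun j => j ≤ i)).biUnion (fun j => Y (σp j))) with hA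
  have hAf : ∀ i, A i ⊆ f (σp i) := fun i => sdiff_subset
  have hAY : ∀ i j : Fin m, i ≤ j → ∀ s ∈ A j, s ∉ Y (σp i) := by
    intro i j hij s hs hsY
    have := (mem_sdiff.mp hs).2
    exact this (mem_union_right _ (mem_biUnion.mpr ⟨i, mem_filter.mpr ⟨mem_univ _, hij⟩, hsY⟩))
  have hAA : ∀ i j : Fin m, i < j → ∀ s ∈ A j, s ∉ f (σp i) := by
    intro i j hij s hs hsf
    have := (mem_sdiff.mp hs).2
    exact this (mem_union_left _ (mem_biUnion.mpr ⟨i, mem_filter.mpr ⟨mem_univ _, hij⟩, hsf⟩))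
  set U : Finset σ := univ.biUnion A with hU
  -- extension map
  set ext : ({s : σ // s ∈ U} → ZMod 2) → (σ → ZMod 2) := fun y s =>
    if h : s ∈ U then y ⟨s, h⟩ else 0 with hext
  have hinj : Function.Injective (fun y => φ (ext y)) := by
    intro y y' hφ
    set x := ext y with hx
    set x' := ext y' with hx'
    have hφ' : φ x = φ x' := hφ
    have key : ∀ n : ℕ, ∀ i : Fin m, (i : ℕ) < n → ∀ s ∈ f (σp i), x s = x' s := by
      intro n
      induction n using Nat.strong_induction_on with
      | _ n IH =>
        intro i hin s hs
        have hYagree : (fun t : {t : σ // t ∈ Y (σp i)} => x t.1)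
            = (fun t : {t : σ // t ∈ Y (σp i)} => x' t.1) := by
          funext t
          by_cases hU' : (t : σ) ∈ U
          · obtain ⟨j, _, hj⟩ := mem_biUnion.mp hU'
            have hji : j < i := by
              by_contra h
              exact hAY i j (le_of_not_gt h) _ hj t.2
            exact IH (j + 1) (by omega) j (Nat.lt_succ_self _) _ (hAf j hj)
          · simp [hx, hx', hext, hU']
        have h1 := hdec (σp i) x
        have h2 := hdec (σp i) x'
        have : (fun t : {t : σ // t ∈ f (σp i)} => x t.1)
            = (fun t : {t : σ // t ∈ f (σp i)} => x' t.1) := by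
          rw [← h1, ← h2, hφ', hYagree]
        exact congrFun this ⟨s, hs⟩
    have hxx : x = x' := by
      funext s
      by_cases hU' : s ∈ U
      · obtain ⟨j, _, hj⟩ := mem_biUnion.mp hU'
        exact key (j + 1) j (Nat.lt_succ_self _) s (hAf j hj)
      · simp [hx, hx', hext, hU']
    funext t
    have := congrFun hxx t.1
    simpa [hx, hx', hext, t.2] using this
  have hcard : 2 ^ U.card ≤ Fintype.card T := by
    have := Fintype.card_le_of_injective _ hinj
    simpa [Fintype.card_fun, ZMod.card] using this
  have hUcard : U.card = ∑ i : Fin m, (A i).card := by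
    rw [hU]
    apply card_biUnion
    intro i _ j _ hij
    rcases lt_or_gt_of_ne hij with h | h
    · exact disjoint_left.mpr fun s hs hs' => hAA i j h s hs' (hAf i hs)
    · exact disjoint_left.mpr fun s hs hs' => hAA j i h s hs (hAf j hs')
  have hsum : (∑ i : Fin m,
        (f (σp i) \
          ((univ.filter (fun j => j < i)).biUnion (fun j => f (σp j)) ∪
           (univ.filter (fun j => j ≤ i)).biUnion (fun j => Y (σp j)))).card) = U.card := by
    rw [hUcard]
  rw [hsum]
  have h2 : ((2 : ℝ)) ^ U.card ≤ (Fintype.card T : ℝ) := by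
    calc ((2 : ℝ)) ^ U.card = ((2 ^ U.card : ℕ) : ℝ) := by push_cast; ring
    _ ≤ _ := Nat.cast_le.mpr hcard
  have hpos : (0 : ℝ) < (2 : ℝ) ^ U.card := by positivity
  calc (U.card : ℝ) = Real.logb 2 ((2 : ℝ) ^ U.card) := by
        rw [Real.logb_pow, Real.logb_self_eq_one (by norm_num)]; ring
    _ ≤ Real.logb 2 (Fintype.card T) :=
        Real.logb_le_logb_of_le (by norm_num) hpos h2
end
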